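/- For any w₁ = (u₁,v₁), w₂ = (u₂,v₂) ∈ V = H¹ × H¹, the drift of the coupled slow-fast Navier–Stokes/reaction–diffusion system satisfies the local monotonicity estimate: ⟨Ãw₁ + F(w₁) - Ãw₂ - F(w₂), w₁-w₂⟩ + |σ(w₁)-σ(w₂)|²_{L_Q} ≤ C(1 + |u₂|⁴_{L⁴}) |w₁-w₂|²_{H}, where Ãw = (Au, (1/ε)Av), F(w) = (-B(u) + f(u,v), (1/ε) g(u,v)), and σ(w) = (σ₁(u), (1/√ε) σ₂(u,v)). -/

import Mathlib

set_option maxHeartbeats 1000000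


open scoped RealInnerProductSpace

/-- Young's inequality with exponents `4/3` and `4`:
`2 a^{3/2} x^{1/2} L ≤ a² + 4 L⁴ x²`. -/
lemma young_key (a x L : ℝ) (ha : 0 ≤ a) (hx : 0 ≤ x) (hL : 0 ≤ L) :
    2 * a ^ ((3 : ℝ) / 2) * x ^ ((1 : ℝ) / 2) * L ≤ a ^ 2 + 4 * L ^ 4 * x ^ 2 := by
  have hpq : ((4 : ℝ) / 3).HolderConjugate 4 := Real.holderConjugate_iff.mpr ⟨by norm_num, by norm_num⟩
  have h1 : (0 : ℝ) ≤ a ^ ((3 : ℝ) / 2) := Real.rpow_nonneg ha _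
  have hx2 : (0 : ℝ) ≤ x ^ ((1 : ℝ) / 2) := Real.rpow_nonneg hx _
  have h2 : (0 : ℝ) ≤ 2 * L * x ^ ((1 : ℝ) / 2) := by positivity
  have hy := Real.young_inequality_of_nonneg h1 h2 hpq
  have e1 : (a ^ ((3 : ℝ) / 2)) ^ ((4 : ℝ) / 3) = a ^ 2 := by
    rw [← Real.rpow_mul ha]
    norm_num
  have e2 : (2 * L * x ^ ((1 : ℝ) / 2)) ^ (4 : ℝ) = 16 * L ^ 4 * x ^ 2 := by
    rw [show ((4:ℝ)) = ((4:ℕ):ℝ) by norm_num, Real.rpow_natCast]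
    have : (x ^ ((1 : ℝ) / 2)) ^ (4 : ℕ) = x ^ 2 := by
      rw [← Real.rpow_natCast (x ^ ((1 : ℝ) / 2)) 4, ← Real.rpow_mul hx]
      norm_num
    rw [mul_pow, mul_pow, this]
    ring
  rw [e1, e2] at hy
  nlinarith [Real.rpow_nonneg ha ((3:ℝ)/2), sq_nonneg a, sq_nonneg (L^2*x)]


/-- Scalar bookkeeping: collecting all the Lipschitz and Young terms. -/
lemma arith_key (Cf Cg Cσ₁ Cσ₂ e L x y : ℝ)
    (hCf : 0 ≤ Cf) (hCg : 0 ≤ Cg) (hCσ₁ : 0 ≤ Cσ₁) (hCσ₂ : 0 ≤ Cσ₂)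
    (he : 0 ≤ e) (hx : 0 ≤ x) (hy : 0 ≤ y) (hL : 0 ≤ L) :
    Cf * (x + y) * x + 4 * L ^ 4 * x ^ 2 + e * (Cg * (x + y) * y)
      + Cσ₁ ^ 2 * x ^ 2 + e * (2 * Cσ₂ ^ 2 * (x ^ 2 + y ^ 2))
    ≤ (5 + 2 * Cf + Cσ₁ ^ 2 + e * (2 * Cg + 2 * Cσ₂ ^ 2)) * (1 + L ^ 4)
        * (x ^ 2 + y ^ 2) := by
  have hL4 : (0 : ℝ) ≤ L ^ 4 := by positivity
  have hS : (0 : ℝ) ≤ x ^ 2 + y ^ 2 := by positivity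
  have hLS : (0 : ℝ) ≤ L ^ 4 * (x ^ 2 + y ^ 2) := mul_nonneg hL4 hS
  have h1 : Cf * (x + y) * x ≤ 2 * Cf * ((1 + L ^ 4) * (x ^ 2 + y ^ 2)) := by
    nlinarith [mul_nonneg hCf (sq_nonneg (x - y)), mul_nonneg hCf (sq_nonneg x),
      mul_nonneg hCf (sq_nonneg y), mul_nonneg hCf hLS]
  have hD : (0 : ℝ) ≤ e * Cg := mul_nonneg he hCg
  have h2 : e * (Cg * (x + y) * y) ≤ 2 * (e * Cg) * ((1 + L ^ 4) * (x ^ 2 + y ^ 2)) := by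
    nlinarith [mul_nonneg hD (sq_nonneg (x - y)), mul_nonneg hD (sq_nonneg x),
      mul_nonneg hD (sq_nonneg y), mul_nonneg hD hLS]
  have h3 : 4 * L ^ 4 * x ^ 2 ≤ 4 * ((1 + L ^ 4) * (x ^ 2 + y ^ 2)) := by
    nlinarith [mul_nonneg hL4 (sq_nonneg y), hS]
  have h4 : Cσ₁ ^ 2 * x ^ 2 ≤ Cσ₁ ^ 2 * ((1 + L ^ 4) * (x ^ 2 + y ^ 2)) := by
    nlinarith [mul_nonneg (sq_nonneg Cσ₁) (sq_nonneg y), mul_nonneg (sq_nonneg Cσ₁) hLS]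
  have hE : (0 : ℝ) ≤ e * Cσ₂ ^ 2 := mul_nonneg he (sq_nonneg _)
  have h5 : e * (2 * Cσ₂ ^ 2 * (x ^ 2 + y ^ 2))
      ≤ 2 * (e * Cσ₂ ^ 2) * ((1 + L ^ 4) * (x ^ 2 + y ^ 2)) := by
    nlinarith [mul_nonneg hE hLS]
  nlinarith [h1, h2, h3, h4, h5, mul_nonneg (mul_nonneg (by norm_num : (0:ℝ) ≤ 1) hS) hL4, hS, hLS]

/-- Local monotonicity for the coupled slow-fast Navier–Stokes/reaction–diffusion
system: with `Ãw = (Au, (1/ε)Av)`, `F(w) = (-B(u)+f(u,v), (1/ε)g(u,v))`,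
`σ(w) = (σ₁(u), (1/√ε)σ₂(u,v))`, one has
`⟨Ãw₁+F(w₁)-Ãw₂-F(w₂), w₁-w₂⟩ + |σ(w₁)-σ(w₂)|² ≤ C(1+|u₂|⁴_{L⁴})|w₁-w₂|²_H`.
Here `⟨Au,u⟩ = -‖u‖₁²` (Stokes operator), the nonlinearity satisfies
`|⟨B(u₁)-B(u₂), u₁-u₂⟩| ≤ 2‖u₁-u₂‖₁^{3/2}|u₁-u₂|^{1/2}|u₂|_{L⁴}` (cancellation
plus interpolation), and `f, g, σ₁, σ₂` are Lipschitz. -/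
theorem stmt12 {H W₁ W₂ : Type*} [NormedAddCommGroup H] [InnerProductSpace ℝ H]
    [NormedAddCommGroup W₁] [NormedAddCommGroup W₂]
    (ε : ℝ) (hε : ε ∈ Set.Ioo (0 : ℝ) 1)
    (AA : H →ₗ[ℝ] H) (B₂ : H → H → H) (f g : H → H → H)
    (σ₁ : H → W₁) (σ₂ : H → H → W₂)
    (n1 nL4 : H → ℝ) (hn1 : ∀ u, 0 ≤ n1 u) (hnL4 : ∀ u, 0 ≤ nL4 u)
    (hA : ∀ u, ⟪AA u, u⟫ = -(n1 u) ^ 2)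
    (hB : ∀ u₁ u₂ : H, |⟪B₂ u₁ u₁ - B₂ u₂ u₂, u₁ - u₂⟫|
      ≤ 2 * (n1 (u₁ - u₂)) ^ ((3 : ℝ) / 2) * ‖u₁ - u₂‖ ^ ((1 : ℝ) / 2) * nL4 u₂)
    (Cf Cg Cσ₁ Cσ₂ : ℝ) (hCf : 0 ≤ Cf) (hCg : 0 ≤ Cg) (hCσ₁ : 0 ≤ Cσ₁) (hCσ₂ : 0 ≤ Cσ₂)
    (hf : ∀ x₁ y₁ x₂ y₂ : H, ‖f x₁ y₁ - f x₂ y₂‖ ≤ Cf * (‖x₁ - x₂‖ + ‖y₁ - y₂‖))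
    (hg : ∀ x₁ y₁ x₂ y₂ : H, ‖g x₁ y₁ - g x₂ y₂‖ ≤ Cg * (‖x₁ - x₂‖ + ‖y₁ - y₂‖))
    (hσ₁ : ∀ x₁ x₂ : H, ‖σ₁ x₁ - σ₁ x₂‖ ≤ Cσ₁ * ‖x₁ - x₂‖)
    (hσ₂ : ∀ x₁ y₁ x₂ y₂ : H, ‖σ₂ x₁ y₁ - σ₂ x₂ y₂‖ ≤ Cσ₂ * (‖x₁ - x₂‖ + ‖y₁ - y₂‖)) :
    ∃ C > (0 : ℝ), ∀ u₁ v₁ u₂ v₂ : H,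
      ⟪AA u₁ - AA u₂, u₁ - u₂⟫ + (1 / ε) * ⟪AA v₁ - AA v₂, v₁ - v₂⟫
        + ⟪(f u₁ v₁ - B₂ u₁ u₁) - (f u₂ v₂ - B₂ u₂ u₂), u₁ - u₂⟫
        + (1 / ε) * ⟪g u₁ v₁ - g u₂ v₂, v₁ - v₂⟫
        + ‖σ₁ u₁ - σ₁ u₂‖ ^ 2 + (1 / ε) * ‖σ₂ u₁ v₁ - σ₂ u₂ v₂‖ ^ 2
      ≤ C * (1 + (nL4 u₂) ^ 4) * (‖u₁ - u₂‖ ^ 2 + ‖v₁ - v₂‖ ^ 2) := by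
  obtain ⟨hε0, hε1⟩ := hε
  have he : (0 : ℝ) < 1 / ε := by positivity
  set e := 1 / ε with hedef
  refine ⟨5 + 2 * Cf + Cσ₁ ^ 2 + e * (2 * Cg + 2 * Cσ₂ ^ 2), by positivity, ?_⟩
  intro u₁ v₁ u₂ v₂
  set x := ‖u₁ - u₂‖ with hxdef
  set y := ‖v₁ - v₂‖ with hydef
  have hx0 : 0 ≤ x := norm_nonneg _
  have hy0 : 0 ≤ y := norm_nonneg _
  set a := n1 (u₁ - u₂) with hadef
  set b := n1 (v₁ - v₂) with hbdef
  set L := nL4 u₂ with hLdef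
  have hL0 : 0 ≤ L := hnL4 _
  have hAu : ⟪AA u₁ - AA u₂, u₁ - u₂⟫ = -a ^ 2 := by
    rw [← map_sub]; exact hA _
  have hAv : ⟪AA v₁ - AA v₂, v₁ - v₂⟫ = -b ^ 2 := by
    rw [← map_sub]; exact hA _
  have hsplit : ⟪(f u₁ v₁ - B₂ u₁ u₁) - (f u₂ v₂ - B₂ u₂ u₂), u₁ - u₂⟫
      = ⟪f u₁ v₁ - f u₂ v₂, u₁ - u₂⟫ - ⟪B₂ u₁ u₁ - B₂ u₂ u₂, u₁ - u₂⟫ := by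
    rw [show (f u₁ v₁ - B₂ u₁ u₁) - (f u₂ v₂ - B₂ u₂ u₂)
        = (f u₁ v₁ - f u₂ v₂) - (B₂ u₁ u₁ - B₂ u₂ u₂) by abel, inner_sub_left]
  have hfb : ⟪f u₁ v₁ - f u₂ v₂, u₁ - u₂⟫ ≤ Cf * (x + y) * x :=
    (real_inner_le_norm _ _).trans
      (mul_le_mul_of_nonneg_right (hf u₁ v₁ u₂ v₂) hx0)
  have hgb : ⟪g u₁ v₁ - g u₂ v₂, v₁ - v₂⟫ ≤ Cg * (x + y) * y :=
    (real_inner_le_norm _ _).trans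
      (mul_le_mul_of_nonneg_right (hg u₁ v₁ u₂ v₂) hy0)
  have hBb : -⟪B₂ u₁ u₁ - B₂ u₂ u₂, u₁ - u₂⟫ ≤ a ^ 2 + 4 * L ^ 4 * x ^ 2 :=
    (neg_le_abs _).trans ((hB u₁ u₂).trans (young_key a x L (hn1 _) hx0 hL0))
  have hs1 : ‖σ₁ u₁ - σ₁ u₂‖ ^ 2 ≤ Cσ₁ ^ 2 * x ^ 2 := by
    have h := hσ₁ u₁ u₂
    nlinarith [norm_nonneg (σ₁ u₁ - σ₁ u₂)]
  have hs2 : ‖σ₂ u₁ v₁ - σ₂ u₂ v₂‖ ^ 2 ≤ 2 * Cσ₂ ^ 2 * (x ^ 2 + y ^ 2) := by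
    have h := hσ₂ u₁ v₁ u₂ v₂
    nlinarith [norm_nonneg (σ₂ u₁ v₁ - σ₂ u₂ v₂), sq_nonneg (x - y), sq_nonneg (Cσ₂ * (x + y))]
  have hgb' : e * ⟪g u₁ v₁ - g u₂ v₂, v₁ - v₂⟫ ≤ e * (Cg * (x + y) * y) :=
    mul_le_mul_of_nonneg_left hgb he.le
  have hs2' : e * ‖σ₂ u₁ v₁ - σ₂ u₂ v₂‖ ^ 2 ≤ e * (2 * Cσ₂ ^ 2 * (x ^ 2 + y ^ 2)) :=
    mul_le_mul_of_nonneg_left hs2 he.le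
  have hbneg : e * ⟪AA v₁ - AA v₂, v₁ - v₂⟫ ≤ 0 := by
    rw [hAv]
    exact mul_nonpos_of_nonneg_of_nonpos he.le (neg_nonpos.mpr (sq_nonneg b))
  have key2 := arith_key Cf Cg Cσ₁ Cσ₂ e L x y hCf hCg hCσ₁ hCσ₂ he.le hx0 hy0 hL0
  rw [hsplit, hAu]
  linarith [hfb, hgb', hBb, hs1, hs2', hbneg, key2]
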